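/- arXiv:2306.08511 — 6 statements merged into one kernel-verified Lean document; each statement's English description precedes it below -/
import Mathlib

section
/- There exists a profile P on 4 issues that is rank-unanimous on some issue b, yet the 0-divisiveness of b under the normalized Copeland score is nonzero; concretely, for the profile with rankings a≻b≻c≻d, c≻b≻a≻d, d≻b≻a≻c (one agent each), issue b has rank 2 for all agents but Div_0^Cop(b, P) = 1/3. -/
open Finset

/-- The sub-population of agents preferring issue `a` to issue `b`
(ranking `p i : I ≃ Fin m` gives 0-based positions, lower = more preferred). -/
def subpop {I A : Type*} [Fintype A] {m : ℕ}
    (p : A → I ≃ Fin m) (a b : I) : Finset A :=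
  Finset.univ.filter fun i => p i a < p i b

/-- Restriction of a profile to a sub-population, as a multiset of rankings. -/
def restr {I A : Type*} {m : ℕ} (p : A → I ≃ Fin m) (X : Finset A) :
    Multiset (I ≃ Fin m) :=
  X.val.map p

/-- Normalised Borda score of issue `a` in a (sub)profile `Q` over `m` issues. -/
noncomputable def bordaM {I : Type*} {m : ℕ}
    (Q : Multiset (I ≃ Fin m)) (a : I) : ℝ :=
  (Q.map fun r => (m : ℝ) - 1 - ((r a : ℕ) : ℝ)).sum /
    ((Multiset.card Q : ℝ) * ((m : ℝ) - 1))

/-- Normalised Copeland score of issue `a` in a (sub)profile `Q` over `m` issues. -/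
noncomputable def copM {I : Type*} [Fintype I] [DecidableEq I] {m : ℕ}
    (Q : Multiset (I ≃ Fin m)) (a : I) : ℝ :=
  ((Finset.univ.filter fun b =>
      b ≠ a ∧ Q.countP (fun r => r b < r a) < Q.countP (fun r => r a < r b)).card : ℝ) /
    ((m : ℝ) - 1)

/-- α-divisiveness of issue `a` w.r.t. scoring function `s`, normalising constant `ℓ`.
A summand is `0` whenever one of the two sub-populations is empty. -/
noncomputable def alphaDiv {I A : Type*} [Fintype I] [DecidableEq I] [Fintype A]
    {m : ℕ} (p : A → I ≃ Fin m) (s : Multiset (I ≃ Fin m) → I → ℝ)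
    (α ℓ : ℝ) (a : I) : ℝ :=
  (1 / ((m : ℝ) - 1)) *
    ∑ b ∈ Finset.univ.erase a,
      if 0 < (subpop p a b).card ∧ 0 < (subpop p b a).card then
        (ℓ * ((subpop p a b).card : ℝ) * ((subpop p b a).card : ℝ) /
            ((Fintype.card A : ℝ)) ^ 2) ^ α *
          |s (restr p (subpop p a b)) a - s (restr p (subpop p b a)) a|
      else 0

/-- Ranking a ≻ b ≻ c ≻ d (issues named 0=a, 1=b, 2=c, 3=d). -/
def rnk1 : Fin 4 ≃ Fin 4 := Equiv.refl _

/-- Ranking c ≻ b ≻ a ≻ d. -/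
def rnk2 : Fin 4 ≃ Fin 4 := Equiv.swap 0 2

/-- Ranking d ≻ b ≻ a ≻ c. -/
def rnk3 : Fin 4 ≃ Fin 4 := (Equiv.swap 2 3).trans (Equiv.swap 0 2)

/-- The 3-agent profile of Proposition 1. -/
def pex2 : Fin 3 → (Fin 4 ≃ Fin 4) := ![rnk1, rnk2, rnk3]

lemma copM_val {I : Type*} [Fintype I] [DecidableEq I] {m : ℕ}
    (Q : Multiset (I ≃ Fin m)) (a : I) (k : ℕ)
    (h : (Finset.univ.filter fun b =>
      b ≠ a ∧ Q.countP (fun r => r b < r a) < Q.countP (fun r => r a < r b)).card = k) :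
    copM Q a = (k : ℝ) / ((m : ℝ) - 1) := by
  rw [copM, h]

/-- the profile a b c d / c b a d / d b a c is rank-unanimous on issue
`b` (= issue `1`, ranked second, i.e. 0-based position 1, by every agent), yet the
0-divisiveness of `b` under the normalised Copeland score is `1/3 ≠ 0`. -/
theorem stmt2 :
    (∀ i : Fin 3, pex2 i 1 = 1) ∧
    alphaDiv pex2 copM 0 4 (1 : Fin 4) = 1 / 3 := by
  refine ⟨by decide, ?_⟩
  rw [alphaDiv,
    show (Finset.univ.erase (1 : Fin 4)) = {0, 2, 3} from by decide,
    Finset.sum_insert (by decide), Finset.sum_insert (by decide), Finset.sum_singleton,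
    show subpop pex2 1 0 = {1, 2} from by decide,
    show subpop pex2 0 1 = {0} from by decide,
    show subpop pex2 1 2 = {0, 2} from by decide,
    show subpop pex2 2 1 = {1} from by decide,
    show subpop pex2 1 3 = {0, 1} from by decide,
    show subpop pex2 3 1 = {2} from by decide,
    copM_val (restr pex2 ({1, 2} : Finset (Fin 3))) 1 1 (by decide),
    copM_val (restr pex2 ({0} : Finset (Fin 3))) 1 2 (by decide),
    copM_val (restr pex2 ({0, 2} : Finset (Fin 3))) 1 1 (by decide),
    copM_val (restr pex2 ({1} : Finset (Fin 3))) 1 2 (by decide),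
    copM_val (restr pex2 ({0, 1} : Finset (Fin 3))) 1 1 (by decide),
    copM_val (restr pex2 ({2} : Finset (Fin 3))) 1 2 (by decide)]
  norm_num [Real.rpow_zero, abs_of_nonpos]
end

section
/- Let P be a fully polarised profile with an even number n of agents: half the agents share ranking ≻_1 and half share ranking ≻_2, where ≻_2 is the reverse of ≻_1. Let a be the top-ranked issue of ≻_1. Then with normalization constant ℓ = 4, Div_α^Borda(a, P) = 1 for every α ∈ [0,1]. -/
open Finset

theorem card_lt_half (k : ℕ) (hk : 1 ≤ k) :
    (Finset.univ.filter fun i : Fin (2*k) => (i:ℕ) < k).card = k := by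
  have : (Finset.univ.filter fun i : Fin (2*k) => (i:ℕ) < k)
      = Finset.Iio (⟨k, by omega⟩ : Fin (2*k)) := by
    ext i; simp [Fin.lt_def]
  rw [this, Fin.card_Iio]

theorem card_ge_half (k : ℕ) (hk : 1 ≤ k) :
    (Finset.univ.filter fun i : Fin (2*k) => ¬ (i:ℕ) < k).card = k := by
  have h2 := Finset.card_filter_add_card_filter_not
    (s := (Finset.univ : Finset (Fin (2*k)))) (p := fun i => (i:ℕ) < k)
  rw [card_lt_half k hk] at h2
  simp at h2 ⊢; omega

/-- in a fully polarised profile with an even number `n = 2k` of agents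
(half with ranking `r1`, half with its reverse `r2`), the issue `a` top-ranked in `r1`
has α-divisiveness `1` under the normalised Borda score with `ℓ = 4`. -/
theorem stmt4 {I : Type*} [Fintype I] [DecidableEq I] {m k : ℕ}
    (hm : 2 ≤ m) (hcard : Fintype.card I = m) (hk : 1 ≤ k)
    (r1 r2 : I ≃ Fin m)
    (hrev : ∀ x : I, (r2 x : ℕ) = m - 1 - (r1 x : ℕ))
    (p : Fin (2 * k) → I ≃ Fin m)
    (hp : ∀ i : Fin (2 * k), p i = if (i : ℕ) < k then r1 else r2)
    (a : I) (ha : (r1 a : ℕ) = 0)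
    (α : ℝ) (hα0 : 0 ≤ α) (hα1 : α ≤ 1) :
    alphaDiv p bordaM α 4 a = 1 := by
  have hk0 : (k : ℝ) ≠ 0 := by positivity
  have hm1 : ((m : ℝ) - 1) ≠ 0 := by
    have : (2:ℝ) ≤ m := by exact_mod_cast hm
    linarith
  have hr2a : (r2 a : ℕ) = m - 1 := by rw [hrev, ha]; omega
  have key : ∀ b ∈ Finset.univ.erase a,
      (if 0 < (subpop p a b).card ∧ 0 < (subpop p b a).card then
        ((4:ℝ) * ((subpop p a b).card : ℝ) * ((subpop p b a).card : ℝ) /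
            ((Fintype.card (Fin (2*k)) : ℝ)) ^ 2) ^ α *
          |bordaM (restr p (subpop p a b)) a - bordaM (restr p (subpop p b a)) a|
      else 0) = 1 := by
    intro b hb
    have hba : b ≠ a := (Finset.mem_erase.mp hb).1
    have hr1b : 0 < (r1 b : ℕ) := by
      rcases Nat.eq_zero_or_pos (r1 b : ℕ) with h | h
      · exact absurd (r1.injective (Fin.val_injective (h.trans ha.symm))) hba
      · exact h
    have hr1blt : (r1 b : ℕ) < m := (r1 b).isLt
    have hr2b : (r2 b : ℕ) < m - 1 := by rw [hrev]; omega
    have hsub1 : subpop p a b = Finset.univ.filter fun i : Fin (2*k) => (i:ℕ) < k := by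
      ext i
      simp only [subpop, Finset.mem_filter, Finset.mem_univ, true_and, hp i]
      split_ifs with h
      · simp only [Fin.lt_def, ha, h, iff_true]; omega
      · simp only [Fin.lt_def, h, iff_false, not_lt]; omega
    have hsub2 : subpop p b a = Finset.univ.filter fun i : Fin (2*k) => ¬ (i:ℕ) < k := by
      ext i
      simp only [subpop, Finset.mem_filter, Finset.mem_univ, true_and, hp i]
      split_ifs with h
      · simp only [Fin.lt_def, h, not_true, iff_false, not_lt, ha]; omega
      · simp only [Fin.lt_def, h, not_false_iff, iff_true]; omega
    have hc1 : (subpop p a b).card = k := by rw [hsub1, card_lt_half k hk]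
    have hc2 : (subpop p b a).card = k := by rw [hsub2, card_ge_half k hk]
    have hr1rest : restr p (subpop p a b) = Multiset.replicate k r1 := by
      unfold restr
      have : (subpop p a b).val.map p = (subpop p a b).val.map (fun _ => r1) := by
        apply Multiset.map_congr rfl
        intro i hi
        rw [hsub1] at hi
        simp only [Finset.mem_val, Finset.mem_filter] at hi
        rw [hp i, if_pos hi.2]
      rw [this, Multiset.map_const', ← Finset.card, hc1]
    have hr2rest : restr p (subpop p b a) = Multiset.replicate k r2 := by
      unfold restr
      have : (subpop p b a).val.map p = (subpop p b a).val.map (fun _ => r2) := by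
        apply Multiset.map_congr rfl
        intro i hi
        rw [hsub2] at hi
        simp only [Finset.mem_val, Finset.mem_filter] at hi
        rw [hp i, if_neg hi.2]
      rw [this, Multiset.map_const', ← Finset.card, hc2]
    have hb1 : bordaM (restr p (subpop p a b)) a = 1 := by
      rw [hr1rest]
      unfold bordaM
      rw [Multiset.map_replicate, Multiset.sum_replicate, Multiset.card_replicate]
      rw [ha]
      push_cast
      field_simp
      rw [nsmul_eq_mul]; ring
    have hb2 : bordaM (restr p (subpop p b a)) a = 0 := by
      rw [hr2rest]
      unfold bordaM
      rw [Multiset.map_replicate, Multiset.sum_replicate, Multiset.card_replicate]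
      rw [hr2a]
      have : ((m - 1 : ℕ) : ℝ) = (m : ℝ) - 1 := by
        have : (1:ℕ) ≤ m := by omega
        push_cast [this]; ring
      rw [this]
      simp
    rw [hc1, hc2, hb1, hb2, if_pos ⟨hk, hk⟩]
    have hbase : (4:ℝ) * (k:ℝ) * (k:ℝ) / ((Fintype.card (Fin (2*k)) : ℝ)) ^ 2 = 1 := by
      rw [Fintype.card_fin]
      push_cast
      field_simp
      ring
    rw [hbase, Real.one_rpow]
    norm_num
  unfold alphaDiv
  rw [Finset.sum_congr rfl key]
  rw [Finset.sum_const, Finset.card_erase_of_mem (Finset.mem_univ a),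
    Finset.card_univ, hcard]
  have : ((m - 1 : ℕ) : ℝ) = (m : ℝ) - 1 := by
    have : (1:ℕ) ≤ m := by omega
    push_cast [this]; ring
  rw [nsmul_eq_mul, this]
  field_simp
end

section
/- Let P be a fully polarised profile with an odd number n of agents (one subpopulation has (n+1)/2 agents with ranking ≻_1, the other has (n−1)/2 agents with the reversed ranking ≻_2). Let a be the top issue of ≻_1. Then the α-divisiveness of a under the normalized Copeland score with ℓ = 4 equals ((n²−1)/n²)^α. -/
open Finset

lemma countP_repl {β : Type*} (q : β → Prop) [DecidablePred q] (n : ℕ) (x : β) :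
    (Multiset.replicate n x).countP q = if q x then n else 0 := by
  induction n with
  | zero => simp
  | succ n ih => rw [Multiset.replicate_succ, Multiset.countP_cons]; split <;> simp_all

lemma card_filt (n c : ℕ) (h : c < n) :
    (Finset.univ.filter fun i : Fin n => (i : ℕ) < c).card = c := by
  have : (Finset.univ.filter fun i : Fin n => (i : ℕ) < c) = Finset.Iio ⟨c, h⟩ := by
    ext i; simp [Fin.lt_def]
  rw [this, Fin.card_Iio]

/-- in a fully polarised profile with an odd number `n = 2k + 1` of agents
(`k + 1` agents with ranking `r1`, `k` with its reverse `r2`), the issue `a` top-ranked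
in `r1` has α-divisiveness `((n² - 1)/n²)^α` under the normalised Copeland score, `ℓ = 4`. -/
theorem stmt5 {I : Type*} [Fintype I] [DecidableEq I] {m k : ℕ}
    (hm : 2 ≤ m) (hcard : Fintype.card I = m) (hk : 1 ≤ k)
    (r1 r2 : I ≃ Fin m)
    (hrev : ∀ x : I, (r2 x : ℕ) = m - 1 - (r1 x : ℕ))
    (p : Fin (2 * k + 1) → I ≃ Fin m)
    (hp : ∀ i : Fin (2 * k + 1), p i = if (i : ℕ) < k + 1 then r1 else r2)
    (a : I) (ha : (r1 a : ℕ) = 0)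
    (α : ℝ) (hα0 : 0 ≤ α) (hα1 : α ≤ 1) :
    alphaDiv p copM α 4 a =
      ((((2 * k + 1 : ℕ) : ℝ) ^ 2 - 1) / ((2 * k + 1 : ℕ) : ℝ) ^ 2) ^ α := by
  classical
  have hra2 : (r2 a : ℕ) = m - 1 := by rw [hrev a, ha]; omega
  have hb0 : ∀ b : I, b ≠ a → 1 ≤ (r1 b : ℕ) := by
    intro b hb
    have : (r1 b : ℕ) ≠ 0 := by
      intro h
      exact hb (r1.injective (Fin.val_injective (h.trans ha.symm)))
    omega
  have h1 : ∀ b : I, b ≠ a → r1 a < r1 b := by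
    intro b hb; rw [Fin.lt_def, ha]; exact hb0 b hb
  have h2 : ∀ b : I, b ≠ a → r2 b < r2 a := by
    intro b hb
    rw [Fin.lt_def, hra2, hrev b]
    have := hb0 b hb
    have := (r1 b).isLt
    omega
  have hsub1 : ∀ b : I, b ≠ a →
      subpop p a b = Finset.univ.filter fun i : Fin (2 * k + 1) => (i : ℕ) < k + 1 := by
    intro b hb
    ext i
    simp only [subpop, mem_filter, mem_univ, true_and, hp i]
    by_cases hik : (i : ℕ) < k + 1
    · simp [hik, h1 b hb]
    · simp [hik, (h2 b hb).asymm]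
  have hsub2 : ∀ b : I, b ≠ a →
      subpop p b a = Finset.univ.filter fun i : Fin (2 * k + 1) => ¬ (i : ℕ) < k + 1 := by
    intro b hb
    ext i
    simp only [subpop, mem_filter, mem_univ, true_and, hp i]
    by_cases hik : (i : ℕ) < k + 1
    · simp [hik, (h1 b hb).asymm]
    · simp [hik, h2 b hb]
  have hcard1 : ∀ b : I, b ≠ a → (subpop p a b).card = k + 1 := by
    intro b hb; rw [hsub1 b hb]; exact card_filt _ _ (by omega)
  have hcard2 : ∀ b : I, b ≠ a → (subpop p b a).card = k := by
    intro b hb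
    rw [hsub2 b hb]
    have h := Finset.card_filter_add_card_filter_not
      (s := (Finset.univ : Finset (Fin (2 * k + 1))))
      (p := fun i : Fin (2 * k + 1) => (i : ℕ) < k + 1)
    rw [card_filt _ _ (by omega : k + 1 < 2 * k + 1)] at h
    have hu : (Finset.univ : Finset (Fin (2 * k + 1))).card = 2 * k + 1 := by simp
    omega
  have hres1 : ∀ b : I, b ≠ a →
      restr p (subpop p a b) = Multiset.replicate (k + 1) r1 := by
    intro b hb
    have hc : ∀ i ∈ (subpop p a b).val, p i = r1 := by
      intro i hi
      rw [hsub1 b hb] at hi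
      have hi' : i ∈ Finset.univ.filter (fun i : Fin (2 * k + 1) => (i : ℕ) < k + 1) := hi
      have : (i : ℕ) < k + 1 := (Finset.mem_filter.mp hi').2
      rw [hp i, if_pos this]
    unfold restr
    rw [Multiset.map_congr rfl hc, Multiset.map_const']
    rw [show (Multiset.card (subpop p a b).val) = (subpop p a b).card from rfl,
      hcard1 b hb]
  have hres2 : ∀ b : I, b ≠ a →
      restr p (subpop p b a) = Multiset.replicate k r2 := by
    intro b hb
    have hc : ∀ i ∈ (subpop p b a).val, p i = r2 := by
      intro i hi
      rw [hsub2 b hb] at hi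
      have hi' : i ∈ Finset.univ.filter (fun i : Fin (2 * k + 1) => ¬ (i : ℕ) < k + 1) := hi
      have : ¬ (i : ℕ) < k + 1 := (Finset.mem_filter.mp hi').2
      rw [hp i, if_neg this]
    unfold restr
    rw [Multiset.map_congr rfl hc, Multiset.map_const']
    rw [show (Multiset.card (subpop p b a).val) = (subpop p b a).card from rfl,
      hcard2 b hb]
  have hm0 : ((m : ℝ) - 1) ≠ 0 := by
    have : (2 : ℝ) ≤ (m : ℝ) := by exact_mod_cast hm
    linarith
  have hc1 : copM (Multiset.replicate (k + 1) r1) a = 1 := by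
    unfold copM
    have hst : (Finset.univ.filter fun b =>
        b ≠ a ∧ (Multiset.replicate (k + 1) r1).countP (fun r => r b < r a) <
          (Multiset.replicate (k + 1) r1).countP (fun r => r a < r b)) =
        Finset.univ.erase a := by
      ext b
      simp only [mem_filter, mem_univ, true_and, mem_erase, and_true, countP_repl]
      constructor
      · exact fun h => h.1
      · intro hb
        refine ⟨hb, ?_⟩
        rw [if_neg (h1 b hb).asymm, if_pos (h1 b hb)]
        omega
    rw [hst, Finset.card_erase_of_mem (Finset.mem_univ a), Finset.card_univ, hcard]
    rw [Nat.cast_sub (by omega), Nat.cast_one]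
    field_simp
  have hc2 : copM (Multiset.replicate k r2) a = 0 := by
    unfold copM
    have hst : (Finset.univ.filter fun b =>
        b ≠ a ∧ (Multiset.replicate k r2).countP (fun r => r b < r a) <
          (Multiset.replicate k r2).countP (fun r => r a < r b)) = ∅ := by
      ext b
      simp only [mem_filter, mem_univ, true_and, notMem_empty, iff_false, not_and,
        countP_repl]
      intro hb
      rw [if_pos (h2 b hb), if_neg (h2 b hb).asymm]
      omega
    rw [hst]
    simp
  unfold alphaDiv
  have hterm : ∀ b ∈ Finset.univ.erase a,
      (if 0 < (subpop p a b).card ∧ 0 < (subpop p b a).card then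
        ((4 : ℝ) * ((subpop p a b).card : ℝ) * ((subpop p b a).card : ℝ) /
            ((Fintype.card (Fin (2 * k + 1)) : ℝ)) ^ 2) ^ α *
          |copM (restr p (subpop p a b)) a - copM (restr p (subpop p b a)) a|
      else 0) =
      ((((2 * k + 1 : ℕ) : ℝ) ^ 2 - 1) / ((2 * k + 1 : ℕ) : ℝ) ^ 2) ^ α := by
    intro b hb
    have hba : b ≠ a := (Finset.mem_erase.mp hb).1
    rw [hcard1 b hba, hcard2 b hba, hres1 b hba, hres2 b hba, hc1, hc2,
      if_pos ⟨Nat.succ_pos k, hk⟩]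
    rw [show |(1 : ℝ) - 0| = 1 by norm_num, mul_one]
    rw [Fintype.card_fin]
    congr 1
    have hn : ((2 * k + 1 : ℕ) : ℝ) ≠ 0 := by positivity
    rw [div_eq_div_iff (by positivity) (by positivity)]
    push_cast
    ring
  rw [Finset.sum_congr rfl hterm, Finset.sum_const,
    Finset.card_erase_of_mem (Finset.mem_univ a), Finset.card_univ, hcard,
    nsmul_eq_mul, Nat.cast_sub (by omega), Nat.cast_one]
  field_simp
end

section
/- In a uniform profile P over m ≥ 2 issues (each of the m! rankings appearing exactly once) with ℓ = 4, for every issue a and every α, Div_α^Cop(a, P) = 1: in the subpopulation preferring a to b, a wins every pairwise majority contest, and in the subpopulation preferring b to a, a loses every pairwise majority contest. -/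
open Finset

set_option linter.unusedSectionVars false

section Helpers
variable {I : Type*} [Fintype I] [DecidableEq I] {m : ℕ}

private lemma card_comp (e : (I ≃ Fin m) ≃ (I ≃ Fin m)) (p q : (I ≃ Fin m) → Prop)
    [DecidablePred p] [DecidablePred q] (h : ∀ r, q r ↔ p (e r)) :
    (univ.filter q).card = (univ.filter p).card := by
  apply Finset.card_equiv e
  intro r
  simp [h r]

private def cswap (x y : I) : (I ≃ Fin m) ≃ (I ≃ Fin m) where
  toFun r := (Equiv.swap x y).trans r
  invFun r := (Equiv.swap x y).trans r
  left_inv r := by ext z; simp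
  right_inv r := by ext z; simp

private lemma pos_ne (r : I ≃ Fin m) {a b : I} (h : a ≠ b) : r a ≠ r b :=
  fun hh => h (r.injective hh)

private lemma not_lt_pos (r : I ≃ Fin m) {a b : I} (h : a ≠ b) :
    (¬ r a < r b) ↔ r b < r a := by
  constructor
  · intro hh
    exact lt_of_le_of_ne (not_lt.mp hh) (pos_ne r (Ne.symm h))
  · intro hh
    exact not_lt.mpr hh.le

private def T3 (a b c : I) : ℕ :=
  (univ.filter fun r : I ≃ Fin m => r a < r b ∧ r b < r c).card

private def T2 (a b : I) : ℕ :=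
  (univ.filter fun r : I ≃ Fin m => r a < r b).card

private lemma half {a b : I} (hab : a ≠ b) :
    2 * T2 (m := m) a b = Fintype.card (I ≃ Fin m) := by
  have h1 : (univ.filter fun r : I ≃ Fin m => r b < r a).card
      = (univ.filter fun r : I ≃ Fin m => r a < r b).card := by
    apply card_comp (cswap a b)
    intro r
    simp [cswap, Equiv.swap_apply_left, Equiv.swap_apply_right]
  have h2 := Finset.card_filter_add_card_filter_not
    (s := (univ : Finset (I ≃ Fin m))) (fun r => r a < r b)
  have h3 : (univ.filter fun r : I ≃ Fin m => ¬ r a < r b)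
      = univ.filter fun r : I ≃ Fin m => r b < r a := by
    apply Finset.filter_congr
    intro r _
    simp [not_lt_pos r hab]
  rw [h3, h1, Finset.card_univ] at h2
  unfold T2
  omega

private lemma T3_swap_left {a b c : I} (hca : c ≠ a) (hcb : c ≠ b) :
    T3 (m := m) b a c = T3 (m := m) a b c := by
  apply card_comp (cswap a b)
  intro r
  simp [cswap, Equiv.swap_apply_left, Equiv.swap_apply_right,
    Equiv.swap_apply_of_ne_of_ne hca hcb]

private lemma T3_swap_right {a b c : I} (hab : a ≠ b) (hac : a ≠ c) :
    T3 (m := m) a c b = T3 (m := m) a b c := by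
  apply card_comp (cswap b c)
  intro r
  simp [cswap, Equiv.swap_apply_left, Equiv.swap_apply_right,
    Equiv.swap_apply_of_ne_of_ne hab hac]

private lemma third {a b c : I} (hab : a ≠ b) (hac : a ≠ c) (hbc : b ≠ c) :
    3 * T3 (m := m) a b c = T2 (m := m) a c := by
  have h1 := Finset.card_filter_add_card_filter_not
    (s := univ.filter fun r : I ≃ Fin m => r a < r c) (fun r => r b < r a)
  have e1 : ((univ.filter fun r : I ≃ Fin m => r a < r c).filter fun r => r b < r a)
      = univ.filter fun r : I ≃ Fin m => r b < r a ∧ r a < r c := by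
    rw [Finset.filter_filter]
    apply Finset.filter_congr; intro r _; simp [and_comm]
  have e2 : ((univ.filter fun r : I ≃ Fin m => r a < r c).filter fun r => ¬ r b < r a)
      = univ.filter fun r : I ≃ Fin m => r a < r c ∧ r a < r b := by
    rw [Finset.filter_filter]
    apply Finset.filter_congr; intro r _
    simp [not_lt_pos r (Ne.symm hab)]
  rw [e1, e2] at h1
  have h2 := Finset.card_filter_add_card_filter_not
    (s := univ.filter fun r : I ≃ Fin m => r a < r c ∧ r a < r b) (fun r => r b < r c)
  have e3 : ((univ.filter fun r : I ≃ Fin m => r a < r c ∧ r a < r b).filter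
        fun r => r b < r c)
      = univ.filter fun r : I ≃ Fin m => r a < r b ∧ r b < r c := by
    rw [Finset.filter_filter]
    ext r
    simp only [Finset.mem_filter, Finset.mem_univ, true_and]
    constructor
    · rintro ⟨⟨_, h2⟩, h3⟩; exact ⟨h2, h3⟩
    · rintro ⟨h2, h3⟩; exact ⟨⟨h2.trans h3, h2⟩, h3⟩
  have e4 : ((univ.filter fun r : I ≃ Fin m => r a < r c ∧ r a < r b).filter
        fun r => ¬ r b < r c)
      = univ.filter fun r : I ≃ Fin m => r a < r c ∧ r c < r b := by
    rw [Finset.filter_filter]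
    ext r
    simp only [Finset.mem_filter, Finset.mem_univ, true_and, not_lt_pos r hbc]
    constructor
    · rintro ⟨⟨h2, _⟩, h3⟩; exact ⟨h2, h3⟩
    · rintro ⟨h2, h3⟩; exact ⟨⟨h2, h2.trans h3⟩, h3⟩
  rw [e3, e4] at h2
  have hba := T3_swap_left (m := m) (Ne.symm hbc) (Ne.symm hac)
  have hacb := T3_swap_right (m := m) hab hac
  unfold T3 at hba hacb ⊢
  unfold T2
  omega

private lemma split {x y z w : I} (hzw : z ≠ w) :
    T2 (m := m) x y
      = (univ.filter fun r : I ≃ Fin m => r x < r y ∧ r z < r w).card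
        + (univ.filter fun r : I ≃ Fin m => r x < r y ∧ r w < r z).card := by
  have h := Finset.card_filter_add_card_filter_not
    (s := univ.filter fun r : I ≃ Fin m => r x < r y) (fun r => r z < r w)
  have e1 : ((univ.filter fun r : I ≃ Fin m => r x < r y).filter fun r => r z < r w)
      = univ.filter fun r : I ≃ Fin m => r x < r y ∧ r z < r w :=
    Finset.filter_filter _ _ _
  have e2 : ((univ.filter fun r : I ≃ Fin m => r x < r y).filter fun r => ¬ r z < r w)
      = univ.filter fun r : I ≃ Fin m => r x < r y ∧ r w < r z := by
    rw [Finset.filter_filter]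
    apply Finset.filter_congr; intro r _
    simp [not_lt_pos r hzw]
  rw [e1, e2] at h
  unfold T2
  omega

/-- In the sub-profile preferring `a` to `b`, `a` beats any third issue `c`. -/
private lemma sideA {a b c : I} (hN : 0 < Fintype.card (I ≃ Fin m))
    (hab : a ≠ b) (hca : c ≠ a) (hcb : c ≠ b) :
    (univ.filter fun r : I ≃ Fin m => r a < r b ∧ r c < r a).card
      < (univ.filter fun r : I ≃ Fin m => r a < r b ∧ r a < r c).card := by
  have hL : (univ.filter fun r : I ≃ Fin m => r a < r b ∧ r c < r a).card
      = T3 (m := m) c a b := by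
    unfold T3
    congr 1
    ext r
    simp only [Finset.mem_filter, Finset.mem_univ, true_and, and_comm]
  have h1 : 3 * T3 (m := m) c a b = T2 (m := m) c b := third hca hcb hab
  have h2 : 2 * T2 (m := m) c b = Fintype.card (I ≃ Fin m) := half hcb
  have h3 := split (m := m) (x := a) (y := b) hca
  have h4 : 2 * T2 (m := m) a b = Fintype.card (I ≃ Fin m) := half hab
  omega

/-- In the sub-profile preferring `b` to `a`, `a` does not beat the third issue `c`. -/
private lemma sideB {a b c : I} (hab : a ≠ b) (hca : c ≠ a) (hcb : c ≠ b) :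
    ¬ ((univ.filter fun r : I ≃ Fin m => r b < r a ∧ r c < r a).card
      < (univ.filter fun r : I ≃ Fin m => r b < r a ∧ r a < r c).card) := by
  have hR : (univ.filter fun r : I ≃ Fin m => r b < r a ∧ r a < r c).card
      = T3 (m := m) b a c := rfl
  have h1 : 3 * T3 (m := m) b a c = T2 (m := m) b c :=
    third (Ne.symm hab) (Ne.symm hcb) (Ne.symm hca)
  have h2 : 2 * T2 (m := m) b c = Fintype.card (I ≃ Fin m) := half (Ne.symm hcb)
  have h3 := split (m := m) (x := b) (y := a) hca
  have h4 : 2 * T2 (m := m) b a = Fintype.card (I ≃ Fin m) := half (Ne.symm hab)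
  omega

private lemma countP_restr (S : Finset (I ≃ Fin m)) (p : (I ≃ Fin m) → Prop)
    [DecidablePred p] :
    (restr (fun r : I ≃ Fin m => r) S).countP p = (S.filter p).card := by
  have h : restr (fun r : I ≃ Fin m => r) S = S.val := Multiset.map_id' _
  rw [h, Multiset.countP_eq_card_filter]
  rfl

private lemma subpop_eq (a b : I) :
    subpop (fun r : I ≃ Fin m => r) a b
      = univ.filter fun r : I ≃ Fin m => r a < r b := rfl

end Helpers

/-- in the uniform profile consisting of each of the `m!` rankings exactly
once, in the sub-population preferring `a` to `b` issue `a` has Copeland score `1` (it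
wins every majority contest) and in the one preferring `b` to `a` it has Copeland score
`0`; hence every issue has α-divisiveness `1` under the normalised Copeland score, `ℓ = 4`. -/
theorem stmt8 {I : Type*} [Fintype I] [DecidableEq I] {m : ℕ}
    (hm : 2 ≤ m) (hcard : Fintype.card I = m)
    (α : ℝ) (hα0 : 0 ≤ α) (hα1 : α ≤ 1) (a : I) :
    (∀ b : I, b ≠ a →
      copM (restr (fun r : I ≃ Fin m => r) (subpop (fun r : I ≃ Fin m => r) a b)) a = 1 ∧
      copM (restr (fun r : I ≃ Fin m => r) (subpop (fun r : I ≃ Fin m => r) b a)) a = 0) ∧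
    alphaDiv (fun r : I ≃ Fin m => r) copM α 4 a = 1 := by
  have e : I ≃ Fin m := Fintype.equivFinOfCardEq hcard
  have hNfac : Fintype.card (I ≃ Fin m) = m.factorial := by
    rw [Fintype.card_equiv e, hcard]
  have hN : 0 < Fintype.card (I ≃ Fin m) := by
    rw [hNfac]; exact m.factorial_pos
  have hm1 : ((m : ℝ) - 1) ≠ 0 := by
    have : (2 : ℝ) ≤ (m : ℝ) := by exact_mod_cast hm
    linarith
  -- the countP rewriting for a subprofile
  have hcnt : ∀ (x y u v : I),
      (restr (fun r : I ≃ Fin m => r) (subpop (fun r : I ≃ Fin m => r) x y)).countP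
          (fun r => r u < r v)
        = (univ.filter fun r : I ≃ Fin m => r x < r y ∧ r u < r v).card := by
    intro x y u v
    rw [subpop_eq, countP_restr, Finset.filter_filter]
  have main : ∀ b : I, b ≠ a →
      copM (restr (fun r : I ≃ Fin m => r) (subpop (fun r : I ≃ Fin m => r) a b)) a = 1 ∧
      copM (restr (fun r : I ≃ Fin m => r) (subpop (fun r : I ≃ Fin m => r) b a)) a = 0 := by
    intro b hb
    constructor
    · -- Copeland score 1
      simp only [copM]
      have hfil : (Finset.univ.filter fun c : I =>
            c ≠ a ∧ (restr (fun r : I ≃ Fin m => r)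
                (subpop (fun r : I ≃ Fin m => r) a b)).countP (fun r => r c < r a)
              < (restr (fun r : I ≃ Fin m => r)
                (subpop (fun r : I ≃ Fin m => r) a b)).countP (fun r => r a < r c))
          = Finset.univ.filter fun c : I => c ≠ a := by
        apply Finset.filter_congr
        intro c _
        simp only [and_iff_left_iff_imp]
        intro hc
        rw [hcnt a b c a, hcnt a b a c]
        by_cases hcb : c = b
        · subst hcb
          have h0 : (univ.filter fun r : I ≃ Fin m => r a < r c ∧ r c < r a).card = 0 := by
            rw [Finset.card_eq_zero, Finset.filter_eq_empty_iff]
            intro r _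
            rintro ⟨h1, h2⟩
            exact absurd h2 (not_lt.mpr h1.le)
          have h1 : (univ.filter fun r : I ≃ Fin m => r a < r c ∧ r a < r c).card
              = T2 (m := m) a c := by
            unfold T2; congr 1; ext r; simp
          have h2 : 2 * T2 (m := m) a c = Fintype.card (I ≃ Fin m) :=
            half (Ne.symm hc)
          omega
        · exact sideA hN (Ne.symm hb) hc (fun h => hcb h)
      rw [hfil]
      have hcard' : (Finset.univ.filter fun c : I => c ≠ a).card = m - 1 := by
        rw [Finset.filter_ne', Finset.card_erase_of_mem (Finset.mem_univ a),
          Finset.card_univ, hcard]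
      rw [hcard']
      rw [Nat.cast_sub (by omega), Nat.cast_one]
      exact div_self hm1
    · -- Copeland score 0
      simp only [copM]
      have hfil : (Finset.univ.filter fun c : I =>
            c ≠ a ∧ (restr (fun r : I ≃ Fin m => r)
                (subpop (fun r : I ≃ Fin m => r) b a)).countP (fun r => r c < r a)
              < (restr (fun r : I ≃ Fin m => r)
                (subpop (fun r : I ≃ Fin m => r) b a)).countP (fun r => r a < r c))
          = (∅ : Finset I) := by
        rw [Finset.filter_eq_empty_iff]
        intro c _
        rintro ⟨hc, hlt⟩
        rw [hcnt b a c a, hcnt b a a c] at hlt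
        by_cases hcb : c = b
        · subst hcb
          have h0 : (univ.filter fun r : I ≃ Fin m => r c < r a ∧ r a < r c).card = 0 := by
            rw [Finset.card_eq_zero, Finset.filter_eq_empty_iff]
            intro r _
            rintro ⟨h1, h2⟩
            exact absurd h2 (not_lt.mpr h1.le)
          omega
        · exact absurd hlt (sideB (Ne.symm hb) hc (fun h => hcb h))
      rw [hfil]
      simp
  refine ⟨main, ?_⟩
  -- α-divisiveness
  simp only [alphaDiv]
  have hterm : ∀ b ∈ Finset.univ.erase a,
      (if 0 < (subpop (fun r : I ≃ Fin m => r) a b).card ∧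
            0 < (subpop (fun r : I ≃ Fin m => r) b a).card then
          ((4 : ℝ) * ((subpop (fun r : I ≃ Fin m => r) a b).card : ℝ) *
                ((subpop (fun r : I ≃ Fin m => r) b a).card : ℝ) /
              ((Fintype.card (I ≃ Fin m) : ℝ)) ^ 2) ^ α *
            |copM (restr (fun r : I ≃ Fin m => r)
                (subpop (fun r : I ≃ Fin m => r) a b)) a -
              copM (restr (fun r : I ≃ Fin m => r)
                (subpop (fun r : I ≃ Fin m => r) b a)) a|
        else 0) = 1 := by
    intro b hb
    have hba : b ≠ a := (Finset.mem_erase.mp hb).1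
    have hc1 : (subpop (fun r : I ≃ Fin m => r) a b).card = T2 (m := m) a b := rfl
    have hc2 : (subpop (fun r : I ≃ Fin m => r) b a).card = T2 (m := m) b a := rfl
    have h1 : 2 * T2 (m := m) a b = Fintype.card (I ≃ Fin m) := half (Ne.symm hba)
    have h2 : 2 * T2 (m := m) b a = Fintype.card (I ≃ Fin m) := half hba
    have hpos1 : 0 < T2 (m := m) a b := by omega
    have hpos2 : 0 < T2 (m := m) b a := by omega
    rw [if_pos (by rw [hc1, hc2]; exact ⟨hpos1, hpos2⟩)]
    have hbase : (4 : ℝ) * ((subpop (fun r : I ≃ Fin m => r) a b).card : ℝ) *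
          ((subpop (fun r : I ≃ Fin m => r) b a).card : ℝ) /
        ((Fintype.card (I ≃ Fin m) : ℝ)) ^ 2 = 1 := by
      rw [hc1, hc2]
      have hNr : (Fintype.card (I ≃ Fin m) : ℝ) = 2 * (T2 (m := m) a b : ℝ) := by
        rw [← h1]; push_cast; ring
      have heq : (T2 (m := m) b a : ℝ) = (T2 (m := m) a b : ℝ) := by
        have : T2 (m := m) b a = T2 (m := m) a b := by omega
        rw [this]
      rw [hNr, heq]
      have hne : (T2 (m := m) a b : ℝ) ≠ 0 := by
        simp only [ne_eq, Nat.cast_eq_zero]; omega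
      field_simp
      ring
    rw [hbase, Real.one_rpow]
    obtain ⟨h1', h2'⟩ := main b hba
    rw [h1', h2']
    norm_num
  rw [Finset.sum_congr rfl hterm, Finset.sum_const, nsmul_eq_mul, mul_one]
  have hce : (Finset.univ.erase a).card = m - 1 := by
    rw [Finset.card_erase_of_mem (Finset.mem_univ a), Finset.card_univ, hcard]
  rw [hce, Nat.cast_sub (by omega), Nat.cast_one]
  rw [one_div, inv_mul_cancel₀ hm1]
end

section
/- For a fixed issue a, among all subsets X of agents, the maximum of |Borda(a, P_X) − Borda(a, P_{N\X})| is attained by a 'prefix' set: if agents are ordered so that the rank of a is non-increasing (i.e., r(a, ≻_i) ≥ r(a, ≻_{i+1})), then some X_k = {1,...,k} with 1 ≤ k ≤ n−1 achieves the maximum. -/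
open Finset

/-- Divisiveness of issue `a` with respect to a sub-population `X` (Borda scoring). -/
noncomputable def divX {I : Type*} {n m : ℕ}
    (p : Fin n → I ≃ Fin m) (a : I) (X : Finset (Fin n)) : ℝ :=
  |bordaM (restr p X) a - bordaM (restr p Xᶜ) a|

section Helpers

lemma strictMonoFin_le {k n : ℕ} (g : Fin k → Fin n) (hg : StrictMono g) (j : Fin k) :
    (j : ℕ) ≤ (g j : ℕ) := by
  obtain ⟨j, hj⟩ := j
  induction j with
  | zero => exact Nat.zero_le _
  | succ t ih =>
      have ht : t < k := Nat.lt_of_succ_lt hj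
      have h1 : (⟨t, ht⟩ : Fin k) < ⟨t + 1, hj⟩ := by
        rw [Fin.lt_def]; exact Nat.lt_succ_self t
      have h2 := hg h1
      rw [Fin.lt_def] at h2
      have h3 := ih ht
      simp only [Fin.val_mk] at h2 h3 ⊢
      omega

lemma sum_over_finset {n k : ℕ} (X : Finset (Fin n)) (hk : X.card = k) (f : Fin n → ℝ) :
    ∑ i ∈ X, f i = ∑ j : Fin k, f (X.orderEmbOfFin hk j) := by
  have himg : Finset.image (X.orderEmbOfFin hk) univ = X := by
    apply coe_injective
    simp [Set.image_univ]
  have h := Finset.sum_image (g := X.orderEmbOfFin hk) (s := univ) (f := f)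
    (fun a _ b _ h => (X.orderEmbOfFin hk).injective h)
  rw [himg] at h
  exact h

lemma prefix_eq_image {n k : ℕ} (hk : k ≤ n) :
    (univ.filter fun i : Fin n => (i : ℕ) < k) = Finset.image (Fin.castLE hk) univ := by
  ext i
  simp only [mem_filter, mem_univ, true_and, mem_image]
  constructor
  · intro h; exact ⟨⟨i, h⟩, Fin.ext rfl⟩
  · rintro ⟨j, rfl⟩; exact j.2

lemma prefix_card {n k : ℕ} (hk : k ≤ n) :
    (univ.filter fun i : Fin n => (i : ℕ) < k).card = k := by
  rw [prefix_eq_image hk, Finset.card_image_of_injective _ (Fin.castLE_injective hk)]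
  simp

lemma prefix_sum_le {n k : ℕ} (hk : k ≤ n) (X : Finset (Fin n)) (hX : X.card = k)
    (f : Fin n → ℝ) (hf : Monotone f) :
    ∑ i ∈ univ.filter (fun i : Fin n => (i : ℕ) < k), f i ≤ ∑ i ∈ X, f i := by
  rw [sum_over_finset X hX f, sum_over_finset _ (prefix_card hk) f]
  apply Finset.sum_le_sum
  intro j _
  apply hf
  rw [Fin.le_def]
  have huniq : (Fin.castLE hk : Fin k → Fin n) =
      (univ.filter fun i : Fin n => (i : ℕ) < k).orderEmbOfFin (prefix_card hk) :=
    Finset.orderEmbOfFin_unique _ (fun x => by simp [x.2]) (Fin.strictMono_castLE hk)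
  rw [← huniq]
  exact strictMonoFin_le _ (X.orderEmbOfFin hX).strictMono j

end Helpers

lemma bordaM_restr {I : Type*} {n m : ℕ} (p : Fin n → I ≃ Fin m) (a : I)
    (X : Finset (Fin n)) :
    bordaM (restr p X) a =
      (∑ i ∈ X, ((m : ℝ) - 1 - ((p i a : ℕ) : ℝ))) / ((X.card : ℝ) * ((m : ℝ) - 1)) := by
  simp only [bordaM, restr, Multiset.map_map, Multiset.card_map]
  rfl

lemma key {I : Type*} {n m : ℕ} (hm : 2 ≤ m)
    (p : Fin n → I ≃ Fin m) (a : I)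
    (hsorted : ∀ i j : Fin n, i ≤ j → (p j a : ℕ) ≤ (p i a : ℕ))
    (X : Finset (Fin n)) (hX : X.Nonempty) (hX' : X ≠ Finset.univ) :
    bordaM (restr p Xᶜ) a - bordaM (restr p X) a ≤
      divX p a (Finset.univ.filter fun i : Fin n => (i : ℕ) < X.card) := by
  classical
  set f : Fin n → ℝ := fun i => (m : ℝ) - 1 - ((p i a : ℕ) : ℝ) with hf
  have hfmono : Monotone f := by
    intro i j hij
    have := hsorted i j hij
    simp only [hf]
    have : ((p j a : ℕ) : ℝ) ≤ ((p i a : ℕ) : ℝ) := by exact_mod_cast this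
    linarith
  set k := X.card with hk
  have hkn : k ≤ n := by
    have := Finset.card_le_card (Finset.subset_univ X)
    simpa using this
  have hk1 : 1 ≤ k := Finset.card_pos.mpr hX
  have hklt : k < n := by
    have := Finset.card_lt_card (Finset.ssubset_univ_iff.mpr hX')
    simpa using this
  set P := Finset.univ.filter fun i : Fin n => (i : ℕ) < k with hP
  have hPcard : P.card = k := prefix_card hkn
  have hXccard : Xᶜ.card = n - k := by
    rw [Finset.card_compl]; simp [hk]
  have hPccard : Pᶜ.card = n - k := by
    rw [Finset.card_compl, hPcard]; simp
  have hc : (0 : ℝ) < (m : ℝ) - 1 := by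
    have : (2 : ℝ) ≤ (m : ℝ) := by exact_mod_cast hm
    linarith
  have hkr : (0 : ℝ) < (k : ℝ) := by exact_mod_cast hk1
  have hur : (0 : ℝ) < ((n - k : ℕ) : ℝ) := by
    have : 1 ≤ n - k := by omega
    exact_mod_cast this
  set T := ∑ i : Fin n, f i with hT
  set S := ∑ i ∈ X, f i with hS
  set Sg := ∑ i ∈ P, f i with hSg
  have hXcsum : ∑ i ∈ Xᶜ, f i = T - S := by
    have := Finset.sum_add_sum_compl X f
    linarith
  have hPcsum : ∑ i ∈ Pᶜ, f i = T - Sg := by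
    have := Finset.sum_add_sum_compl P f
    linarith
  have hSgS : Sg ≤ S := prefix_sum_le hkn X rfl f hfmono
  rw [divX, bordaM_restr, bordaM_restr, bordaM_restr, bordaM_restr]
  show (∑ i ∈ Xᶜ, f i) / ((Xᶜ.card : ℝ) * ((m:ℝ)-1)) - S / ((X.card : ℝ) * ((m:ℝ)-1)) ≤
    |Sg / ((P.card : ℝ) * ((m:ℝ)-1)) - (∑ i ∈ Pᶜ, f i) / ((Pᶜ.card : ℝ) * ((m:ℝ)-1))|
  rw [hXcsum, hPcsum, hXccard, hPccard, hPcard, ← hk]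
  have step1 : (T - S) / (((n-k:ℕ) : ℝ) * ((m:ℝ)-1)) - S / ((k : ℝ) * ((m:ℝ)-1)) ≤
      (T - Sg) / (((n-k:ℕ) : ℝ) * ((m:ℝ)-1)) - Sg / ((k : ℝ) * ((m:ℝ)-1)) := by
    have hd1 : (0:ℝ) < ((n-k:ℕ):ℝ) * ((m:ℝ)-1) := mul_pos hur hc
    have hd2 : (0:ℝ) < (k:ℝ) * ((m:ℝ)-1) := mul_pos hkr hc
    apply sub_le_sub
    · exact (div_le_div_iff_of_pos_right hd1).mpr (by linarith)
    · exact (div_le_div_iff_of_pos_right hd2).mpr hSgS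
  refine le_trans step1 ?_
  have heq : (T - Sg) / (((n-k:ℕ) : ℝ) * ((m:ℝ)-1)) - Sg / ((k : ℝ) * ((m:ℝ)-1)) =
      -(Sg / ((k : ℝ) * ((m:ℝ)-1)) - (T - Sg) / (((n-k:ℕ) : ℝ) * ((m:ℝ)-1))) := by ring
  rw [heq]
  exact neg_le_abs _

/-- with agents ordered by non-increasing rank of `a`, the maximum of the
Borda divisiveness over nonempty proper sub-populations is attained by a prefix
`{1, …, k}` for some `1 ≤ k ≤ n - 1`. -/
theorem stmt10 {I : Type*} {n m : ℕ} (hm : 2 ≤ m) (hn : 2 ≤ n)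
    (p : Fin n → I ≃ Fin m) (a : I)
    (hsorted : ∀ i j : Fin n, i ≤ j → (p j a : ℕ) ≤ (p i a : ℕ))
    (X : Finset (Fin n)) (hX : X.Nonempty) (hX' : X ≠ Finset.univ) :
    ∃ k : ℕ, 1 ≤ k ∧ k ≤ n - 1 ∧
      divX p a X ≤ divX p a (Finset.univ.filter fun i : Fin n => (i : ℕ) < k) := by
  classical
  have hk1 : 1 ≤ X.card := Finset.card_pos.mpr hX
  have hklt : X.card < n := by
    have := Finset.card_lt_card (Finset.ssubset_univ_iff.mpr hX')
    simpa using this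
  rcases le_or_gt (bordaM (restr p X) a) (bordaM (restr p Xᶜ) a) with h | h
  · refine ⟨X.card, hk1, by omega, ?_⟩
    have hkey := key hm p a hsorted X hX hX'
    calc divX p a X = bordaM (restr p Xᶜ) a - bordaM (restr p X) a := by
          rw [divX, abs_of_nonpos (by linarith), neg_sub]
      _ ≤ _ := hkey
  · have hXc : Xᶜ.Nonempty := by
      rw [← Finset.card_pos, Finset.card_compl]
      simp only [Fintype.card_fin]
      omega
    have hXc' : Xᶜ ≠ Finset.univ := by
      intro hcon
      have : X = (⊥ : Finset (Fin n)) := by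
        have := congrArg (·ᶜ) hcon
        simpa using this
      simp [this] at hX
    have hXccard : Xᶜ.card = n - X.card := by
      rw [Finset.card_compl]; simp
    refine ⟨n - X.card, by omega, by omega, ?_⟩
    have hkey := key hm p a hsorted Xᶜ hXc hXc'
    rw [compl_compl, hXccard] at hkey
    calc divX p a X = bordaM (restr p X) a - bordaM (restr p Xᶜ) a := by
          rw [divX, abs_of_nonneg (by linarith)]
      _ ≤ _ := hkey
end

section
/- Swap monotonicity for Borda divisiveness: with agents ordered by non-increasing rank of issue a, if X ⊆ N contains agent i but not agent i−z (for some 1 ≤ z ≤ i−1), then replacing i by i−z does not decrease the divisiveness: Div(X') ≥ Div(X) where X' = (X \ {i}) ∪ {i−z}, provided Borda(a, P_X) ≥ Borda(a, P_{N\X}). -/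
open Finset

lemma borda_eq' {I : Type*} {n m : ℕ} (p : Fin n → I ≃ Fin m) (a : I) (S : Finset (Fin n)) :
    bordaM (restr p S) a =
      (∑ x ∈ S, ((m:ℝ)-1-((p x a : ℕ):ℝ))) / ((S.card : ℝ) * ((m:ℝ)-1)) := by
  simp only [bordaM, restr, Multiset.map_map, Multiset.card_map, Function.comp]
  rfl

/-- swap monotonicity. With agents ordered by non-increasing rank of `a`,
if `X` is the side with the weakly smaller Borda score of `a`, contains `i` but not an
earlier agent `j < i`, then exchanging `i` for `j` weakly decreases the Borda score of
`X`, weakly increases that of the complement, and weakly increases the divisiveness. -/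
theorem stmt11 {I : Type*} {n m : ℕ} (hm : 2 ≤ m)
    (p : Fin n → I ≃ Fin m) (a : I)
    (hsorted : ∀ i j : Fin n, i ≤ j → (p j a : ℕ) ≤ (p i a : ℕ))
    (X : Finset (Fin n)) (i j : Fin n) (hji : j < i)
    (hi : i ∈ X) (hj : j ∉ X)
    (hle : bordaM (restr p X) a ≤ bordaM (restr p Xᶜ) a) :
    bordaM (restr p (insert j (X.erase i))) a ≤ bordaM (restr p X) a ∧
    bordaM (restr p Xᶜ) a ≤ bordaM (restr p (insert j (X.erase i))ᶜ) a ∧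
    divX p a X ≤ divX p a (insert j (X.erase i)) := by
  classical
  set f : Fin n → ℝ := fun x => (m:ℝ)-1-((p x a : ℕ):ℝ) with hf
  have hfji : f j ≤ f i := by
    have := hsorted j i hji.le
    simp only [hf]
    have : ((p i a : ℕ) : ℝ) ≤ ((p j a : ℕ) : ℝ) := by exact_mod_cast this
    linarith
  have hjX : j ∉ X.erase i := fun h => hj (Finset.mem_of_mem_erase h)
  have hiXc : i ∉ Xᶜ := by simp [hi]
  have hjXc : j ∈ Xᶜ := by simp [hj]
  have hcard : (insert j (X.erase i)).card = X.card := by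
    rw [Finset.card_insert_of_notMem hjX, Finset.card_erase_of_mem hi]
    have : 1 ≤ X.card := Finset.card_pos.mpr ⟨i, hi⟩
    omega
  have hcomp : (insert j (X.erase i))ᶜ = insert i (Xᶜ.erase j) := by
    ext x
    simp only [Finset.mem_compl, Finset.mem_insert, Finset.mem_erase, Finset.mem_compl]
    have hne : j ≠ i := hji.ne
    by_cases hx : x = i <;> by_cases hx' : x = j <;> simp_all
  have hiXce : i ∉ Xᶜ.erase j := fun h => hiXc (Finset.mem_of_mem_erase h)
  have hcardc : (insert j (X.erase i))ᶜ.card = Xᶜ.card := by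
    rw [hcomp, Finset.card_insert_of_notMem hiXce, Finset.card_erase_of_mem hjXc]
    have : 1 ≤ Xᶜ.card := Finset.card_pos.mpr ⟨j, hjXc⟩
    omega
  have hsum : ∑ x ∈ insert j (X.erase i), f x = ∑ x ∈ X, f x - f i + f j := by
    rw [Finset.sum_insert hjX, ← Finset.sum_erase_add X f hi]
    ring
  have hsumc : ∑ x ∈ (insert j (X.erase i))ᶜ, f x = ∑ x ∈ Xᶜ, f x - f j + f i := by
    rw [hcomp, Finset.sum_insert hiXce, ← Finset.sum_erase_add Xᶜ f hjXc]
    ring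
  have hm1 : (1:ℝ) ≤ (m:ℝ) - 1 := by
    have : (2:ℝ) ≤ (m:ℝ) := by exact_mod_cast hm
    linarith
  have hXpos : (0:ℝ) < (X.card : ℝ) := by
    exact_mod_cast Finset.card_pos.mpr ⟨i, hi⟩
  have hXcpos : (0:ℝ) < (Xᶜ.card : ℝ) := by
    exact_mod_cast Finset.card_pos.mpr ⟨j, hjXc⟩
  have hdpos : (0:ℝ) < (X.card : ℝ) * ((m:ℝ) - 1) := by positivity
  have hdcpos : (0:ℝ) < (Xᶜ.card : ℝ) * ((m:ℝ) - 1) := by positivity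
  have h1 : bordaM (restr p (insert j (X.erase i))) a ≤ bordaM (restr p X) a := by
    rw [borda_eq', borda_eq', hcard, hsum]
    exact div_le_div_of_nonneg_right (by linarith) hdpos.le
  have h2 : bordaM (restr p Xᶜ) a ≤ bordaM (restr p (insert j (X.erase i))ᶜ) a := by
    rw [borda_eq', borda_eq', hcardc, hsumc]
    exact div_le_div_of_nonneg_right (by linarith) hdcpos.le
  refine ⟨h1, h2, ?_⟩
  unfold divX
  have hle' : bordaM (restr p (insert j (X.erase i))) a ≤
      bordaM (restr p (insert j (X.erase i))ᶜ) a := h1.trans (hle.trans h2)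
  rw [abs_sub_comm, abs_of_nonneg (by linarith), abs_sub_comm, abs_of_nonneg (by linarith)]
  linarith
end
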